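/- arXiv:1712.07400 — 2 statements merged into one kernel-verified Lean document; each statement's English description precedes it below -/
import Mathlib

section
/- If a unit vector |X⟩ = ∑_{i=1}^{2m} γ_i |i⟩ has some index l with | |γ_l|² − 1/(2m) | > f/m for some f > 0, then the probability that a measurement of |X⟩ in the Fourier basis does NOT yield the uniform superposition state |0̄⟩ = (1/√(2m))∑_i |i⟩ is strictly greater than f²/(4m²). -/
open scoped BigOperators

/-- if some amplitude of a unit state deviates from 1/(2m) by more
than f/m, a Fourier-basis measurement fails to give the uniform superposition
with probability greater than f²/(4m²). -/
theorem fourier_projection_detects_nonuniformity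
    (m : ℕ) (hm : 1 ≤ m) (X : EuclideanSpace ℂ (Fin (2 * m)))
    (hX : ‖X‖ = 1) (f : ℝ) (hf : 0 < f)
    (hl : ∃ l, |‖X l‖ ^ 2 - 1 / (2 * m)| > f / m)
    (ubar : EuclideanSpace ℂ (Fin (2 * m)))
    (hubar : ∀ i, ubar i = 1 / Real.sqrt (2 * m)) :
    1 - ‖(inner ℂ X ubar : ℂ)‖ ^ 2 > f ^ 2 / (4 * m ^ 2) := by
  obtain ⟨l, hl⟩ := hl
  have hm' : (1:ℝ) ≤ m := by exact_mod_cast hm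
  have hmpos : (0:ℝ) < m := by linarith
  have h2m : (0:ℝ) < 2 * m := by linarith
  have hs2m : (0:ℝ) < Real.sqrt (2 * m) := Real.sqrt_pos.2 h2m
  -- amplitudes
  set A : ℝ := ‖X l‖ with hAdef
  set B : ℝ := 1 / Real.sqrt (2 * m) with hBdef
  have hA0 : 0 ≤ A := norm_nonneg _
  have hB0 : 0 ≤ B := by positivity
  have hB2 : B ^ 2 = 1 / (2 * m) := by
    rw [hBdef, div_pow, one_pow, Real.sq_sqrt h2m.le]
  -- norms of ubar entries
  have hubn : ∀ i, ‖ubar i‖ = B := by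
    intro i
    rw [hubar i, hBdef]
    rw [norm_div, norm_one, Complex.norm_real, Real.norm_eq_abs,
      abs_of_nonneg (Real.sqrt_nonneg _)]
  -- sum of squares of X is 1
  have hsum : ∑ i, ‖X i‖ ^ 2 = 1 := by
    have := EuclideanSpace.norm_eq X
    rw [hX] at this
    have h := this.symm
    have h2 : Real.sqrt (∑ i, ‖X i‖ ^ 2) = 1 := h
    have h3 : (∑ i, ‖X i‖ ^ 2) = 1 := by
      have hnn : 0 ≤ ∑ i, ‖X i‖ ^ 2 := Finset.sum_nonneg fun _ _ => sq_nonneg _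
      nlinarith [Real.sq_sqrt hnn, h2]
    exact h3
  -- sums over the erased finset
  have hXsub : ∑ i ∈ Finset.univ.erase l, ‖X i‖ ^ 2 = 1 - A ^ 2 := by
    have h := Finset.add_sum_erase Finset.univ (fun i => ‖X i‖ ^ 2) (Finset.mem_univ l)
    rw [hsum] at h
    simp only at h
    linarith
  have hUsub : ∑ i ∈ Finset.univ.erase l, ‖ubar i‖ ^ 2 = 1 - B ^ 2 := by
    have hconst : ∀ i ∈ Finset.univ.erase l, ‖ubar i‖ ^ 2 = B ^ 2 := by
      intro i _; rw [hubn i]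
    rw [Finset.sum_congr rfl hconst, Finset.sum_const]
    have hcard : (Finset.univ.erase l).card = 2 * m - 1 := by
      rw [Finset.card_erase_of_mem (Finset.mem_univ l), Finset.card_univ, Fintype.card_fin]
    rw [hcard, nsmul_eq_mul, hB2]
    have hcast : ((2 * m - 1 : ℕ) : ℝ) = 2 * m - 1 := by
      have : 1 ≤ 2 * m := by omega
      push_cast [this]; ring
    rw [hcast]
    field_simp
  have hA1 : A ^ 2 ≤ 1 := by
    have : 0 ≤ ∑ i ∈ Finset.univ.erase l, ‖X i‖ ^ 2 :=
      Finset.sum_nonneg fun _ _ => sq_nonneg _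
    linarith [hXsub]
  have hB1 : B ^ 2 ≤ 1 := by
    rw [hB2]
    rw [div_le_one h2m]; linarith
  -- square roots of complements
  set sa : ℝ := Real.sqrt (1 - A ^ 2) with hsadef
  set sb : ℝ := Real.sqrt (1 - B ^ 2) with hsbdef
  have hsa0 : 0 ≤ sa := Real.sqrt_nonneg _
  have hsb0 : 0 ≤ sb := Real.sqrt_nonneg _
  have hsa2 : sa ^ 2 = 1 - A ^ 2 := Real.sq_sqrt (by linarith)
  have hsb2 : sb ^ 2 = 1 - B ^ 2 := Real.sq_sqrt (by linarith)
  -- bound on the inner product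
  set C : ℝ := ‖(inner ℂ X ubar : ℂ)‖ with hCdef
  have hC0 : 0 ≤ C := norm_nonneg _
  have hCbound : C ≤ A * B + sa * sb := by
    have hinner : (inner ℂ X ubar : ℂ) = ∑ i, (starRingEnd ℂ) (X i) * ubar i := by
      rw [PiLp.inner_apply]
      exact Finset.sum_congr rfl fun i _ => by rw [RCLike.inner_apply]; ring
    have hsplit : (inner ℂ X ubar : ℂ)
        = (starRingEnd ℂ) (X l) * ubar l
          + ∑ i ∈ Finset.univ.erase l, (starRingEnd ℂ) (X i) * ubar i := by
      rw [hinner, ← Finset.add_sum_erase Finset.univ _ (Finset.mem_univ l)]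
    have h1 : C ≤ ‖(starRingEnd ℂ) (X l) * ubar l‖
        + ‖∑ i ∈ Finset.univ.erase l, (starRingEnd ℂ) (X i) * ubar i‖ := by
      rw [hCdef, hsplit]; exact norm_add_le _ _
    have h2 : ‖(starRingEnd ℂ) (X l) * ubar l‖ = A * B := by
      rw [norm_mul, RingHomIsometric.norm_map, hubn l]
    have h3 : ‖∑ i ∈ Finset.univ.erase l, (starRingEnd ℂ) (X i) * ubar i‖
        ≤ ∑ i ∈ Finset.univ.erase l, ‖X i‖ * ‖ubar i‖ := by
      refine (norm_sum_le _ _).trans ?_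
      apply Finset.sum_le_sum
      intro i _
      rw [norm_mul, RingHomIsometric.norm_map]
    have h4 : ∑ i ∈ Finset.univ.erase l, ‖X i‖ * ‖ubar i‖ ≤ sa * sb := by
      calc ∑ i ∈ Finset.univ.erase l, ‖X i‖ * ‖ubar i‖
          ≤ Real.sqrt (∑ i ∈ Finset.univ.erase l, ‖X i‖ ^ 2)
            * Real.sqrt (∑ i ∈ Finset.univ.erase l, ‖ubar i‖ ^ 2) :=
            Real.sum_mul_le_sqrt_mul_sqrt _ _ _
        _ = sa * sb := by rw [hXsub, hUsub]
    linarith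
  -- turn the hypothesis into a square bound
  have hlB : |A ^ 2 - B ^ 2| > f / m := by rwa [hB2]
  have hfm : 0 ≤ f / m := by positivity
  have hsq : (f / m) ^ 2 < (A ^ 2 - B ^ 2) ^ 2 := by
    have := pow_lt_pow_left₀ hlB hfm (n := 2) (by norm_num)
    rwa [sq_abs] at this
  clear_value A B sa sb C
  clear hX hubar hubn hsum hXsub hUsub hAdef hBdef hCdef hsadef hsbdef X ubar
  -- key algebraic inequality
  have hkey : (A ^ 2 - B ^ 2) ^ 2 ≤ 1 - (A * B + sa * sb) ^ 2 := by
    nlinarith [sq_nonneg (A * sa - B * sb), hsa2, hsb2]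
  have hCsq : C ^ 2 ≤ (A * B + sa * sb) ^ 2 :=
    pow_le_pow_left₀ hC0 hCbound 2
  have hfinal : 1 - C ^ 2 > (f / m) ^ 2 := by linarith
  have hlast : (f / m) ^ 2 ≥ f ^ 2 / (4 * m ^ 2) := by
    rw [div_pow, ge_iff_le]
    gcongr
    linarith [sq_nonneg (m:ℝ)]
  calc 1 - C ^ 2 > (f / m) ^ 2 := hfinal
    _ ≥ f ^ 2 / (4 * m ^ 2) := hlast
end

section
/- Let |S⟩ = ∑_{i=1}^{m} a_i |i⟩|ψ_i⟩ and |S'⟩ = ∑_{i=1}^{m} a'_i |i⟩|ψ'_i⟩ be unit vectors with each |ψ_i⟩, |ψ'_i⟩ a unit vector, and define |δ_i⟩ = a_i|ψ_i⟩ − a'_i|ψ'_i⟩. If there exists k with ⟨δ_k|δ_k⟩ ≥ z, then after multiplying |S'⟩ by a suitable global phase making ⟨S|S'⟩ real and nonnegative, the SWAP test between |S⟩ and |S'⟩ rejects with probability at least z/4. -/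
open scoped BigOperators

/-- state consistency. If some component difference
δ_k = a_k|ψ_k⟩ − a'_k|ψ'_k⟩ has squared norm at least z, and the global phase
of |S'⟩ has been chosen so that ⟨S|S'⟩ is real and nonnegative, then the SWAP
test between |S⟩ and |S'⟩ rejects with probability at least z/4. -/
theorem swapS_test_soundness
    (m : ℕ) (V : Type*) [NormedAddCommGroup V] [InnerProductSpace ℂ V]
    (a a' : Fin m → ℂ) (ψ ψ' : Fin m → V)
    (hψ : ∀ i, ‖ψ i‖ = 1) (hψ' : ∀ i, ‖ψ' i‖ = 1)
    (S S' : PiLp 2 (fun _ : Fin m => V))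
    (hS : ∀ i, S i = a i • ψ i) (hS' : ∀ i, S' i = a' i • ψ' i)
    (hSnorm : ‖S‖ = 1) (hS'norm : ‖S'‖ = 1)
    (hreal : ((inner ℂ S S' : ℂ)).im = 0) (hnonneg : 0 ≤ ((inner ℂ S S' : ℂ)).re)
    (z : ℝ) (hk : ∃ k, ‖a k • ψ k - a' k • ψ' k‖ ^ 2 ≥ z) :
    (1 - ‖(inner ℂ S S' : ℂ)‖ ^ 2) / 2 ≥ z / 4 := by
  set c : ℝ := ((inner ℂ S S' : ℂ)).re with hc
  have hnormi : ‖(inner ℂ S S' : ℂ)‖ = c := by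
    have : (inner ℂ S S' : ℂ) = (c : ℝ) := by
      apply Complex.ext
      · simp [hc]
      · rw [hreal]; simp
    rw [this, Complex.norm_real]
    exact Real.norm_of_nonneg hnonneg
  have hc1 : c ≤ 1 := by
    have := norm_inner_le_norm (𝕜 := ℂ) S S'
    rw [hSnorm, hS'norm, hnormi] at this
    simpa using this
  -- sum of component differences
  have hsum : z ≤ ∑ i, ‖S i - S' i‖ ^ 2 := by
    obtain ⟨k, hk⟩ := hk
    calc z ≤ ‖S k - S' k‖ ^ 2 := by rw [hS, hS']; exact hk
      _ ≤ ∑ i, ‖S i - S' i‖ ^ 2 :=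
        Finset.single_le_sum (f := fun i => ‖S i - S' i‖ ^ 2) (fun i _ => sq_nonneg _) (Finset.mem_univ k)
  have hdiff : ‖S - S'‖ ^ 2 = ∑ i, ‖S i - S' i‖ ^ 2 := by
    rw [PiLp.norm_sq_eq_of_L2]
    rfl
  have hexp : ‖S - S'‖ ^ 2 = 2 - 2 * c := by
    rw [@norm_sub_sq ℂ, hSnorm, hS'norm]
    simp [hc]
    ring
  have hcz : c ≤ 1 - z / 2 := by
    have : z ≤ 2 - 2 * c := by rw [← hexp, hdiff]; exact hsum
    linarith
  have hzle : z / 2 ≤ 1 - c := by linarith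
  have : 1 - c ^ 2 = (1 - c) * (1 + c) := by ring
  rw [hnormi]
  nlinarith [sq_nonneg c, mul_nonneg (sub_nonneg.2 hc1) hnonneg]
end
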